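/- Let H = (V, E) be a hypergraph whose associated bipartite graph bip H is connected, and let f : E → ℕ be a hypertree in H. Then for every nonempty subset E' ⊆ E one has ∑_{e ∈ E'} f(e) ≤ μ(E') = |⋃E'| − c(E'). -/

import Mathlib

open SimpleGraph

/-- The bipartite graph associated to a hypergraph with hyperedge set `E`,
vertex set `V`, and incidence function `I`. -/
def bip {V E : Type*} (I : E → Finset V) : SimpleGraph (E ⊕ V) :=
  SimpleGraph.fromRel fun a b =>
    ∃ e v, a = Sum.inl e ∧ b = Sum.inr v ∧ v ∈ I e


lemma card_succ_le_of_surj {A B : Type*} [Finite A] (f : A → B) (hf : Function.Surjective f)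
    {a1 a2 : A} (hne : a1 ≠ a2) (heq : f a1 = f a2) : Nat.card B + 1 ≤ Nat.card A := by
  classical
  haveI := Fintype.ofFinite A
  have hsurj : Function.Surjective (fun x : {x : A // x ≠ a1} => f x.val) := by
    intro b
    obtain ⟨a, rfl⟩ := hf b
    by_cases h : a = a1
    · exact ⟨⟨a2, hne.symm⟩, by rw [h, heq]⟩
    · exact ⟨⟨a, h⟩, rfl⟩
  have h1 : Nat.card B ≤ Nat.card {x : A // x ≠ a1} := Nat.card_le_card_of_surjective _ hsurj
  have hA : Nat.card A = Nat.card {x : A // x = a1} + Nat.card {x : A // x ≠ a1} := by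
    rw [← Nat.card_sum]
    exact (Nat.card_congr (Equiv.sumCompl (fun x => x = a1))).symm
  have h1' : Nat.card {x : A // x = a1} = 1 := by
    rw [Nat.card_eq_one_iff_unique]
    exact ⟨⟨fun x y => Subtype.ext (x.2.trans y.2.symm)⟩, ⟨⟨a1, rfl⟩⟩⟩
  omega

lemma comp_card_le_of_le {α : Type*} [Finite α] {G H : SimpleGraph α} (h : H ≤ G) :
    Nat.card G.ConnectedComponent ≤ Nat.card H.ConnectedComponent := by
  apply Nat.card_le_card_of_surjective (ConnectedComponent.map (Hom.ofLE h))
  intro c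
  exact c.ind (fun v => ⟨H.connectedComponentMk v, rfl⟩)

lemma forest_bound {α : Type*} [Fintype α] :
    ∀ (n : ℕ) (G : SimpleGraph α), G.edgeSet.ncard = n → G.IsAcyclic →
      n + Nat.card G.ConnectedComponent ≤ Fintype.card α := by
  intro n
  induction n with
  | zero =>
    intro G _ _
    simpa [← Nat.card_eq_fintype_card] using
      Nat.card_le_card_of_surjective G.connectedComponentMk
        (fun c => c.ind (fun v => ⟨v, rfl⟩))
  | succ n ih =>
    intro G hcard hG
    have hfin : G.edgeSet.Finite := Set.toFinite _
    have hne : G.edgeSet.Nonempty := by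
      rw [Set.nonempty_iff_ne_empty]; intro h; rw [h] at hcard; simp at hcard
    obtain ⟨e, he⟩ := hne
    revert he
    refine Sym2.ind (fun u v he => ?_) e
    have hadj : G.Adj u v := he
    set G' := G \ fromEdgeSet {s(u, v)} with hG'def
    have hle : G' ≤ G := sdiff_le
    have hG'acyc : G'.IsAcyclic := fun _ c hc => hG (c.mapLe hle) (hc.mapLe hle)
    have hedge : G'.edgeSet = G.edgeSet \ {s(u, v)} := by
      rw [hG'def, edgeSet_sdiff, edgeSet_fromEdgeSet, G.edgeSet_sdiff_sdiff_isDiag]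
    have hcard' : G'.edgeSet.ncard = n := by
      rw [hedge, Set.ncard_diff_singleton_of_mem he, hcard]; omega
    have hbridge : ¬ G'.Reachable u v := by
      have := (isAcyclic_iff_forall_adj_isBridge.mp hG) hadj
      exact isBridge_iff.mp this
    have hcomp : Nat.card G.ConnectedComponent + 1 ≤ Nat.card G'.ConnectedComponent := by
      refine card_succ_le_of_surj (ConnectedComponent.map (Hom.ofLE hle))
        (fun c => c.ind (fun w => ⟨G'.connectedComponentMk w, rfl⟩))
        (a1 := G'.connectedComponentMk u) (a2 := G'.connectedComponentMk v) ?_ ?_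
      · intro h
        exact hbridge (ConnectedComponent.exact h)
      · exact ConnectedComponent.sound hadj.reachable
    have := ih G' hcard' hG'acyc
    omega

lemma bip_adj {V E : Type*} (I : E → Finset V) {a b : E ⊕ V} (h : (bip I).Adj a b) :
    ∃ e v, v ∈ I e ∧ ((a = Sum.inl e ∧ b = Sum.inr v) ∨ (a = Sum.inr v ∧ b = Sum.inl e)) := by
  rw [bip, fromRel_adj] at h
  obtain ⟨-, h | h⟩ := h
  · obtain ⟨e, v, rfl, rfl, hv⟩ := h
    exact ⟨e, v, hv, Or.inl ⟨rfl, rfl⟩⟩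
  · obtain ⟨e, v, rfl, rfl, hv⟩ := h
    exact ⟨e, v, hv, Or.inr ⟨rfl, rfl⟩⟩

lemma bip_adj_inl_inr {V E : Type*} (I : E → Finset V) {e : E} {v : V}
    (h : (bip I).Adj (Sum.inl e) (Sum.inr v)) : v ∈ I e := by
  obtain ⟨e', v', hv', h | h⟩ := bip_adj I h
  · obtain ⟨h1, h2⟩ := h
    rw [Sum.inl.injEq] at h1; rw [Sum.inr.injEq] at h2
    rw [h1, h2]; exact hv'
  · exact absurd h.1 (by simp)


/-- `f : E → ℕ` is a hypertree: there is a spanning tree of `bip I` whose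
degree at each `e ∈ E` is `f e + 1`. -/
def IsHypertree {V E : Type*} (I : E → Finset V) (f : E → ℕ) : Prop :=
  ∃ T : SimpleGraph (E ⊕ V), T ≤ bip I ∧ T.IsTree ∧
    ∀ e : E, (T.neighborSet (Sum.inl e)).ncard = f e + 1

/-- The vertex set `E' ⊔ ⋃ E'` of the restriction `bip H |_{E'}`. -/
def suppSet {V E : Type*} (I : E → Finset V) (E' : Finset E) : Set (E ⊕ V) :=
  (Sum.inl '' {e | e ∈ E'}) ∪ (Sum.inr '' {v | ∃ e ∈ E', v ∈ I e})

section Main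
variable {V E : Type*} [Fintype V] [Fintype E] [DecidableEq V]
  (I : E → Finset V) (E' : Finset E) (T : SimpleGraph (E ⊕ V)) (hTle : T ≤ bip I)

-- membership facts
lemma inl_mem_suppSet_iff (e : E) : Sum.inl e ∈ suppSet I E' ↔ e ∈ E' := by
  simp [suppSet]

lemma inr_mem_suppSet_iff (v : V) : Sum.inr v ∈ suppSet I E' ↔ ∃ e ∈ E', v ∈ I e := by
  simp [suppSet]

include hTle in
lemma edge_count {f : E → ℕ} (hdeg : ∀ e : E, (T.neighborSet (Sum.inl e)).ncard = f e + 1) :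
    ((T.induce (suppSet I E')).edgeSet).ncard = ∑ e ∈ E', (f e + 1) := by
  classical
  set S := suppSet I E' with hS
  -- neighbor sets
  have hnbr : ∀ e : E, T.neighborSet (Sum.inl e)
      = Sum.inr '' {v : V | T.Adj (Sum.inl e) (Sum.inr v)} := by
    intro e
    ext x
    constructor
    · intro hx
      have hx' : T.Adj (Sum.inl e) x := hx
      obtain ⟨e', v', hv', h | h⟩ := bip_adj I (hTle hx')
      · obtain ⟨h1, h2⟩ := h
        subst h2
        exact ⟨v', hx', rfl⟩
      · exact absurd h.1 (by simp)
    · rintro ⟨v, hv, rfl⟩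
      exact hv
  have hN : ∀ e : E, {v : V | T.Adj (Sum.inl e) (Sum.inr v)}.ncard = f e + 1 := by
    intro e
    rw [← hdeg e, hnbr e, Set.ncard_image_of_injective _ Sum.inr_injective]
  -- the finset of incident pairs
  set NF : E → Finset V := fun e => Finset.univ.filter (fun v => T.Adj (Sum.inl e) (Sum.inr v))
    with hNF
  set PF : Finset (E × V) := E'.biUnion (fun e => (NF e).image (fun v => (e, v))) with hPF
  have hmemPF : ∀ p : E × V, p ∈ PF ↔ p.1 ∈ E' ∧ T.Adj (Sum.inl p.1) (Sum.inr p.2) := by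
    rintro ⟨e, v⟩
    simp only [hPF, Finset.mem_biUnion, Finset.mem_image, hNF, Finset.mem_filter,
      Finset.mem_univ, true_and, Prod.mk.injEq]
    constructor
    · rintro ⟨e', he', v', hv', rfl, rfl⟩
      exact ⟨he', hv'⟩
    · rintro ⟨he, hv⟩
      exact ⟨e, he, v, hv, rfl, rfl⟩
  have hNcoe : ∀ e : E, ((NF e : Finset V) : Set V) = {v : V | T.Adj (Sum.inl e) (Sum.inr v)} := by
    intro e; ext v; simp [hNF]
  have hPFcard : PF.card = ∑ e ∈ E', (f e + 1) := by
    rw [hPF, Finset.card_biUnion]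
    · refine Finset.sum_congr rfl (fun e _ => ?_)
      rw [Finset.card_image_of_injective _ (fun a b h => (Prod.mk.injEq _ _ _ _).mp h |>.2),
        ← hN e, ← hNcoe e, Set.ncard_coe_finset]
    · intro x _ y _ hxy
      simp only [Finset.disjoint_left, Finset.mem_image]
      rintro a ⟨v, _, rfl⟩ ⟨w, _, h⟩
      exact hxy ((Prod.mk.injEq _ _ _ _).mp h).1.symm
  -- bijection between edges and pairs
  have hmem1 : ∀ p : E × V, p ∈ PF → (Sum.inl p.1 : E ⊕ V) ∈ S := by
    intro p hp
    exact (inl_mem_suppSet_iff I E' p.1).mpr ((hmemPF p).mp hp).1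
  have hmem2 : ∀ p : E × V, p ∈ PF → (Sum.inr p.2 : E ⊕ V) ∈ S := by
    intro p hp
    obtain ⟨h1, h2⟩ := (hmemPF p).mp hp
    exact (inr_mem_suppSet_iff I E' p.2).mpr ⟨p.1, h1, bip_adj_inl_inr I (hTle h2)⟩
  let Φ : {p : E × V // p ∈ PF} → ((T.induce S).edgeSet) := fun p =>
    ⟨s(⟨Sum.inl p.1.1, hmem1 p.1 p.2⟩, ⟨Sum.inr p.1.2, hmem2 p.1 p.2⟩),
      by exact ((hmemPF p.1).mp p.2).2⟩
  have hbij : Function.Bijective Φ := by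
    constructor
    · rintro ⟨p, hp⟩ ⟨q, hq⟩ h
      simp only [Φ, Subtype.ext_iff, Sym2.eq_iff] at h
      rcases h with ⟨h1, h2⟩ | ⟨h1, h2⟩
      · exact Subtype.ext (Prod.ext (Sum.inl_injective h1) (Sum.inr_injective h2))
      · exact absurd h1 (by simp)
    · rintro ⟨q, hq⟩
      revert hq
      refine Sym2.ind (fun a b hq => ?_) q
      have hab : T.Adj a.val b.val := hq
      obtain ⟨e, v, -, ⟨ha, hb⟩ | ⟨ha, hb⟩⟩ := bip_adj I (hTle hab)
      · have he : e ∈ E' := (inl_mem_suppSet_iff I E' e).mp (ha ▸ a.2)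
        have hadj : T.Adj (Sum.inl e) (Sum.inr v) := by rw [← ha, ← hb]; exact hab
        refine ⟨⟨(e, v), (hmemPF (e, v)).mpr ⟨he, hadj⟩⟩, ?_⟩
        simp only [Φ, Subtype.ext_iff]
        congr 1
        exacts [Subtype.ext ha.symm, Subtype.ext hb.symm]
      · have he : e ∈ E' := (inl_mem_suppSet_iff I E' e).mp (hb ▸ b.2)
        have hadj : T.Adj (Sum.inl e) (Sum.inr v) := by rw [← ha, ← hb]; exact hab.symm
        refine ⟨⟨(e, v), (hmemPF (e, v)).mpr ⟨he, hadj⟩⟩, ?_⟩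
        simp only [Φ, Subtype.ext_iff]
        rw [Sym2.eq_swap]
        congr 1
        exacts [Subtype.ext ha.symm, Subtype.ext hb.symm]
  have h := Nat.card_eq_of_bijective Φ hbij
  rw [Nat.card_eq_finsetCard] at h
  rw [← Nat.card_coe_set_eq, ← h, hPFcard]

end Main


/-- `c(E')`: the number of connected components of the induced subgraph of
`bip I` on `E' ⊔ ⋃ E'`. -/
noncomputable def numComp {V E : Type*} (I : E → Finset V) (E' : Finset E) : ℕ :=
  Nat.card ((bip I).induce (suppSet I E')).ConnectedComponent

/-- `μ(E') = |⋃ E'| - c(E')`. -/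
noncomputable def mu {V E : Type*} [DecidableEq V] (I : E → Finset V)
    (E' : Finset E) : ℤ :=
  ((E'.biUnion I).card : ℤ) - numComp I E'

/-- For every hypertree `f` and every nonempty `E' ⊆ E`,
`∑_{e ∈ E'} f e ≤ μ(E')`. -/
theorem hypertree_le_mu {V E : Type*} [Fintype V] [Fintype E] [DecidableEq V]
    (I : E → Finset V) (hne : ∀ e, (I e).Nonempty) (hconn : (bip I).Connected)
    (f : E → ℕ) (hf : IsHypertree I f) (E' : Finset E) (hE' : E'.Nonempty) :
    (∑ e ∈ E', (f e : ℤ)) ≤ mu I E' := by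
  classical
  obtain ⟨T, hTle, hTtree, hdeg⟩ := hf
  set S := suppSet I E' with hS
  set F := T.induce S with hF
  haveI : Fintype ↥S := Fintype.ofFinite _
  have hFacyc : F.IsAcyclic := fun v c hc =>
    hTtree.IsAcyclic (c.map (Embedding.induce (G := T) S).toHom)
      (hc.map (Embedding.induce (G := T) S).injective)
  have hle : F ≤ (bip I).induce S := fun a b hab => hTle hab
  have hforest := forest_bound (F.edgeSet.ncard) F rfl hFacyc
  have hcomp : Nat.card ((bip I).induce S).ConnectedComponent
      ≤ Nat.card F.ConnectedComponent := comp_card_le_of_le hle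
  have hedges : F.edgeSet.ncard = ∑ e ∈ E', (f e + 1) := edge_count I E' T hTle hdeg
  have hcardS : Fintype.card ↥S = E'.card + (E'.biUnion I).card := by
    rw [← Nat.card_eq_fintype_card, Nat.card_coe_set_eq, hS, suppSet,
      Set.ncard_union_eq ?_ (Set.toFinite _) (Set.toFinite _)]
    · rw [Set.ncard_image_of_injective _ Sum.inl_injective,
        Set.ncard_image_of_injective _ Sum.inr_injective]
      congr 1
      · rw [show {e | e ∈ E'} = (E' : Set E) from rfl, Set.ncard_coe_finset]
      · rw [show {v | ∃ e ∈ E', v ∈ I e} = ((E'.biUnion I : Finset V) : Set V) by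
            ext v; simp, Set.ncard_coe_finset]
    · rw [Set.disjoint_left]
      rintro x ⟨e, -, rfl⟩ ⟨v, -, h⟩
      simp at h
  have hnum : numComp I E' = Nat.card ((bip I).induce S).ConnectedComponent := rfl
  have key : (∑ e ∈ E', (f e + 1)) + numComp I E' ≤ E'.card + (E'.biUnion I).card := by
    rw [← hedges, ← hcardS, hnum]
    exact le_trans (Nat.add_le_add_left hcomp _) hforest
  have hsum : ∑ e ∈ E', (f e + 1) = (∑ e ∈ E', f e) + E'.card := by
    rw [Finset.sum_add_distrib, Finset.sum_const, smul_eq_mul, mul_one]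
  have hnat : (∑ e ∈ E', f e) + numComp I E' ≤ (E'.biUnion I).card := by omega
  rw [mu]
  have := (Nat.cast_le (α := ℤ)).mpr hnat
  push_cast at this ⊢
  linarith
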